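/- Let Q ≥ 1 and let B(z) = Σ_j b_{jQ} z^{jQ} and C(z) = Σ_j c_{jQ} z^{jQ} be power series with nonnegative coefficients supported on multiples of Q, and D = B·C with coefficients d_n. Suppose there are positive constants C₀, r, α, β with α < 1 < β such that b_n = O(n^{−β} r^{−n}) and c_n ~ C₀ n^{−α} r^{−n} as n → ∞ along multiples of Q, and B(r) ≠ 0. Then d_n ~ B(r)·c_n as n → ∞ along multiples of Q. -/

import Mathlib

open Filter Real Topology

lemma psum_aux {a : ℝ} (ha0 : 0 < a) (ha1 : a < 1) (n : ℕ) :
    ∑ k ∈ Finset.range n, ((k : ℝ) + 1) ^ (-a) ≤ (n : ℝ) ^ (1 - a) / (1 - a) := by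
  induction n with
  | zero => simp [Real.zero_rpow (by linarith : (1:ℝ) - a ≠ 0)]
  | succ n ih =>
    rw [Finset.sum_range_succ]
    have hy : (0:ℝ) < (n:ℝ) + 1 := by positivity
    have hx : (0:ℝ) ≤ (n:ℝ) := n.cast_nonneg
    have key : ((n:ℝ)) ^ (1 - a) + (1 - a) * ((n:ℝ)+1) ^ (-a) ≤ ((n:ℝ)+1) ^ (1 - a) := by
      have hAM : ((n:ℝ)) ^ (1 - a) * ((n:ℝ)+1) ^ a ≤ (1-a) * n + a * ((n:ℝ)+1) :=
        Real.geom_mean_le_arith_mean2_weighted (by linarith) ha0.le hx hy.le (by ring)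
      have hpow : (0:ℝ) < ((n:ℝ)+1) ^ a := Real.rpow_pos_of_pos hy a
      rw [← mul_le_mul_iff_of_pos_right hpow]
      have e1 : ((n:ℝ)+1) ^ (-a) * ((n:ℝ)+1) ^ a = 1 := by
        rw [← Real.rpow_add hy]; simp
      have e2 : ((n:ℝ)+1) ^ (1-a) * ((n:ℝ)+1) ^ a = (n:ℝ)+1 := by
        rw [← Real.rpow_add hy]; simp
      calc ((n:ℝ) ^ (1-a) + (1-a) * ((n:ℝ)+1)^(-a)) * ((n:ℝ)+1)^a
          = (n:ℝ)^(1-a) * ((n:ℝ)+1)^a + (1-a) * (((n:ℝ)+1)^(-a) * ((n:ℝ)+1)^a) := by ring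
        _ ≤ (1-a)*n + a*((n:ℝ)+1) + (1-a) * 1 := by rw [e1]; linarith
        _ = (n:ℝ)+1 := by ring
        _ = ((n:ℝ)+1)^(1-a) * ((n:ℝ)+1)^a := e2.symm
    have h1a : (0:ℝ) < 1 - a := by linarith
    push_cast
    calc (∑ k ∈ Finset.range n, ((k : ℝ) + 1) ^ (-a)) + ((n:ℝ)+1)^(-a)
        ≤ (n:ℝ)^(1-a)/(1-a) + ((n:ℝ)+1)^(-a) := add_le_add_left ih _
      _ ≤ ((n:ℝ)+1)^(1-a)/(1-a) := by
          rw [le_div_iff₀ h1a]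
          have e : ((n:ℝ)^(1-a)/(1-a) + ((n:ℝ)+1)^(-a))*(1-a)
              = (n:ℝ)^(1-a) + (1-a)*((n:ℝ)+1)^(-a) := by field_simp
          rw [e]; exact key

set_option maxHeartbeats 2000000 in
/-- Meir–Moon Tauberian theorem for series supported on multiples of Q:
if b_n = O(n^{−β} r^{−n}) and c_n ~ C₀ n^{−α} r^{−n} along multiples of Q, with
0 < α < 1 < β, B(r) = Σ b_n r^n ≠ 0, then the convolution d_n = Σ b_m c_{n−m}
satisfies d_n ~ B(r)·c_n along multiples of Q. -/
theorem stmt_10 (Q : ℕ) (hQ : 1 ≤ Q)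
    (b c : ℕ → ℝ) (hbnn : ∀ n, 0 ≤ b n) (hcnn : ∀ n, 0 ≤ c n)
    (hbsupp : ∀ n, ¬ Q ∣ n → b n = 0) (hcsupp : ∀ n, ¬ Q ∣ n → c n = 0)
    (d : ℕ → ℝ) (hd : ∀ n, d n = ∑ m ∈ Finset.range (n + 1), b m * c (n - m))
    (C₀ r α β : ℝ) (hC₀ : 0 < C₀) (hr : 0 < r) (hα : 0 < α) (hβpos : 0 < β)
    (hαβ : α < 1 ∧ 1 < β)
    (hbO : ∃ K : ℝ, ∀ᶠ n in atTop ⊓ 𝓟 {n : ℕ | Q ∣ n},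
      b n ≤ K * (n : ℝ) ^ (-β) / r ^ n)
    (hcasymp : Tendsto (fun n : ℕ => c n / (C₀ * (n : ℝ) ^ (-α) / r ^ n))
      (atTop ⊓ 𝓟 {n : ℕ | Q ∣ n}) (𝓝 1))
    (hBsum : Summable (fun n => b n * r ^ n))
    (hBr : (∑' n, b n * r ^ n) ≠ 0) :
    Tendsto (fun n : ℕ => d n / ((∑' m, b m * r ^ m) * c n))
      (atTop ⊓ 𝓟 {n : ℕ | Q ∣ n}) (𝓝 1) := by
  obtain ⟨hα1, hβ1⟩ := hαβ
  set l := atTop ⊓ 𝓟 {n : ℕ | Q ∣ n} with hl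
  set B := ∑' m, b m * r ^ m with hB
  have hr0 : r ≠ 0 := ne_of_gt hr
  set D : ℕ → ℝ := fun k => C₀ * (k : ℝ) ^ (-α) / r ^ k with hDdef
  have hDpos : ∀ k : ℕ, 1 ≤ k → 0 < D k := by
    intro k hk
    have hk0 : (0:ℝ) < (k:ℝ) := by exact_mod_cast hk
    rw [hDdef]
    positivity
  have hρ : Tendsto (fun n : ℕ => c n / D n) l (𝓝 1) := hcasymp
  have hevQ : ∀ᶠ n in l, Q ∣ n := by
    rw [hl]
    exact eventually_inf_principal.mpr (Eventually.of_forall fun n h => h)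
  have hevge : ∀ N : ℕ, ∀ᶠ n in l, N ≤ n := by
    intro N
    exact (eventually_ge_atTop N).filter_mono inf_le_left
  -- extract two-sided bounds on c from the asymptotic
  obtain ⟨Nc, hNc⟩ : ∃ N : ℕ, ∀ n, N ≤ n → Q ∣ n → |c n / D n - 1| < 2⁻¹ := by
    have hdist : ∀ᶠ n in l, |c n / D n - 1| < 2⁻¹ := by
      have := Metric.tendsto_nhds.mp hρ 2⁻¹ (by norm_num)
      simpa [Real.dist_eq] using this
    rw [hl, eventually_inf_principal] at hdist
    obtain ⟨N, hN⟩ := eventually_atTop.mp hdist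
    exact ⟨N, fun n hn hdvd => hN n hn hdvd⟩
  set N₁ := max Nc 1 with hN₁def
  have hN₁1 : 1 ≤ N₁ := le_max_right Nc 1
  have hcb : ∀ n : ℕ, N₁ ≤ n → Q ∣ n → D n / 2 ≤ c n ∧ c n ≤ 2 * D n := by
    intro n hn hdvd
    have h1 : 1 ≤ n := le_trans hN₁1 hn
    have hDp : 0 < D n := hDpos n h1
    have habs := hNc n (le_trans (le_max_left _ _) hn) hdvd
    rw [abs_lt] at habs
    have hlow : (1:ℝ)/2 ≤ c n / D n := by
      have := habs.1; linarith
    have hhigh : c n / D n ≤ 2 := by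
      have := habs.2; linarith
    constructor
    · calc D n / 2 = (1/2) * D n := by ring
        _ ≤ (c n / D n) * D n := mul_le_mul_of_nonneg_right hlow hDp.le
        _ = c n := div_mul_cancel₀ _ (ne_of_gt hDp)
    · calc c n = (c n / D n) * D n := (div_mul_cancel₀ _ (ne_of_gt hDp)).symm
        _ ≤ 2 * D n := mul_le_mul_of_nonneg_right hhigh hDp.le
  -- uniform b bound
  obtain ⟨K, hK⟩ := hbO
  set K' := max K 0 with hK'def
  have hK'0 : (0:ℝ) ≤ K' := le_max_right K 0
  obtain ⟨Nb, hNb⟩ : ∃ N : ℕ, ∀ m, N ≤ m → b m ≤ K' * (m:ℝ) ^ (-β) / r ^ m := by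
    rw [hl, eventually_inf_principal] at hK
    obtain ⟨N, hN⟩ := eventually_atTop.mp hK
    refine ⟨N, fun m hm => ?_⟩
    by_cases hdvd : Q ∣ m
    · refine le_trans (hN m hm hdvd) ?_
      rw [mul_div_assoc, mul_div_assoc]
      refine mul_le_mul_of_nonneg_right (le_max_left K 0) ?_
      have := Real.rpow_nonneg (Nat.cast_nonneg m) (-β)
      have := pow_pos hr m
      positivity
    · rw [hbsupp m hdvd]
      positivity
  -- uniform c bound : c k * r^k ≤ M₁ (k+1)^{-α}
  obtain ⟨M₀, hM₀⟩ : ∃ M₀ : ℝ, ∀ k, k < N₁ → c k * r ^ k * ((k:ℝ)+1) ^ α ≤ M₀ := by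
    obtain ⟨M, hM⟩ := ((Finset.range N₁).image fun k => c k * r ^ k * ((k:ℝ)+1) ^ α).exists_le
    exact ⟨M, fun k hk => hM _ (Finset.mem_image_of_mem _ (Finset.mem_range.mpr hk))⟩
  set M₁ := max (2 * C₀ * 2 ^ α) (max M₀ 0) with hM₁def
  have hM₁pos : 0 < M₁ := by
    have : (0:ℝ) < 2 * C₀ * 2 ^ α := by positivity
    exact lt_of_lt_of_le this (le_max_left _ _)
  have hM₁ : ∀ k : ℕ, c k * r ^ k ≤ M₁ * ((k:ℝ)+1) ^ (-α) := by
    intro k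
    have hk1 : (0:ℝ) < (k:ℝ) + 1 := by positivity
    rcases lt_or_ge k N₁ with hk | hk
    · have e : c k * r ^ k = c k * r ^ k * ((k:ℝ)+1) ^ α * ((k:ℝ)+1) ^ (-α) := by
        rw [mul_assoc, ← Real.rpow_add hk1]; simp
      rw [e]
      have h1 : c k * r ^ k * ((k:ℝ)+1) ^ α ≤ M₁ :=
        le_trans (hM₀ k hk) (le_trans (le_max_left _ _) (le_max_right _ _))
      exact mul_le_mul_of_nonneg_right h1 (Real.rpow_nonneg hk1.le _)
    · by_cases hdvd : Q ∣ k
      · have hk1' : 1 ≤ k := le_trans hN₁1 hk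
        have hk0 : (0:ℝ) < (k:ℝ) := by exact_mod_cast hk1'
        have hkc := (hcb k hk hdvd).2
        have e1 : D k * r ^ k = C₀ * (k:ℝ) ^ (-α) := by
          rw [hDdef]
          field_simp
        have h2 : c k * r ^ k ≤ 2 * (C₀ * (k:ℝ) ^ (-α)) := by
          calc c k * r ^ k ≤ 2 * D k * r ^ k :=
                mul_le_mul_of_nonneg_right hkc (pow_nonneg hr.le k)
            _ = 2 * (C₀ * (k:ℝ) ^ (-α)) := by rw [mul_assoc, e1]
        have h3 : (k:ℝ) ^ (-α) ≤ 2 ^ α * ((k:ℝ)+1) ^ (-α) := by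
          have hle : (k:ℝ) + 1 ≤ 2 * k := by
            have : (1:ℝ) ≤ (k:ℝ) := by exact_mod_cast hk1'
            linarith
          have hmono : ((2:ℝ) * k) ^ (-α) ≤ ((k:ℝ)+1) ^ (-α) :=
            rpow_le_rpow_of_nonpos (by positivity) hle (neg_nonpos.mpr hα.le)
          have e2 : ((2:ℝ) * k) ^ (-α) = 2 ^ (-α) * (k:ℝ) ^ (-α) :=
            Real.mul_rpow (by norm_num) hk0.le
          have h2a : (0:ℝ) < (2:ℝ) ^ α := Real.rpow_pos_of_pos two_pos α
          have e3 : (2:ℝ) ^ α * (2:ℝ) ^ (-α) = 1 := by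
            rw [← Real.rpow_add two_pos]; simp
          calc (k:ℝ) ^ (-α) = 2 ^ α * (2 ^ (-α) * (k:ℝ) ^ (-α)) := by
                rw [← mul_assoc, e3, one_mul]
            _ ≤ 2 ^ α * ((k:ℝ)+1) ^ (-α) := by
                apply mul_le_mul_of_nonneg_left _ h2a.le
                rw [← e2]; exact hmono
        calc c k * r ^ k ≤ 2 * (C₀ * (k:ℝ) ^ (-α)) := h2
          _ ≤ 2 * (C₀ * (2 ^ α * ((k:ℝ)+1) ^ (-α))) := by gcongr
          _ = (2 * C₀ * 2 ^ α) * ((k:ℝ)+1) ^ (-α) := by ring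
          _ ≤ M₁ * ((k:ℝ)+1) ^ (-α) :=
              mul_le_mul_of_nonneg_right (le_max_left _ _) (Real.rpow_nonneg hk1.le _)
      · rw [hcsupp k hdvd, zero_mul]
        positivity
  -- ratio limit c(n-m)/c(n) → r^m for Q ∣ m
  have hratio : ∀ m : ℕ, Q ∣ m → Tendsto (fun n : ℕ => c (n - m) / c n) l (𝓝 (r ^ m)) := by
    intro m hQm
    have hsubl : Tendsto (fun n : ℕ => n - m) l l := by
      rw [hl]
      refine tendsto_inf.mpr ⟨(tendsto_sub_atTop_nat m).mono_left inf_le_left, ?_⟩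
      rw [tendsto_principal]
      exact eventually_inf_principal.mpr (Eventually.of_forall fun n hn => Nat.dvd_sub hn hQm)
    have hρm : Tendsto (fun n : ℕ => c (n - m) / D (n - m)) l (𝓝 1) := hρ.comp hsubl
    have hden : Tendsto (fun n : ℕ => D (n - m) / D n) atTop (𝓝 (r ^ m)) := by
      have haux : Tendsto (fun n : ℕ => (1 - (m:ℝ)/n) ^ (-α) * r ^ m) atTop (𝓝 (r ^ m)) := by
        have h1 : Tendsto (fun n : ℕ => 1 - (m:ℝ)/n) atTop (𝓝 1) := by
          have h0 := tendsto_const_div_atTop_nhds_zero_nat (m:ℝ)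
          simpa using h0.const_sub (1:ℝ)
        have h2 : Tendsto (fun n : ℕ => (1 - (m:ℝ)/n) ^ (-α)) atTop (𝓝 1) := by
          have hc : ContinuousAt (fun x : ℝ => x ^ (-α)) 1 :=
            Real.continuousAt_rpow_const 1 (-α) (Or.inl one_ne_zero)
          have := hc.tendsto.comp h1
          simpa [Real.one_rpow, Function.comp_def] using this
        simpa using h2.mul_const (r ^ m)
      apply haux.congr'
      filter_upwards [eventually_ge_atTop (m + 1)] with n hn
      have hmn : m ≤ n := le_trans (Nat.le_succ m) hn
      have hn0 : (0:ℝ) < (n:ℝ) := by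
        have : 1 ≤ n := le_trans (Nat.succ_le_succ (Nat.zero_le m)) hn
        exact_mod_cast this
      have hcastn : ((m:ℝ)) + 1 ≤ (n:ℝ) := by exact_mod_cast hn
      have hnm : (0:ℝ) < (n:ℝ) - m := by linarith
      have hcast : ((n - m : ℕ) : ℝ) = (n:ℝ) - m := by
        push_cast [hmn]; ring
      have hpow : r ^ n = r ^ (n - m) * r ^ m := by
        rw [← pow_add, Nat.sub_add_cancel hmn]
      rw [hDdef]
      simp only
      rw [hcast]
      have e1 : 1 - (m:ℝ)/n = ((n:ℝ) - m)/n := by field_simp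
      rw [e1, Real.div_rpow hnm.le hn0.le]
      have hne1 : ((n:ℝ)) ^ (-α) ≠ 0 := ne_of_gt (Real.rpow_pos_of_pos hn0 _)
      have hne2 : r ^ (n - m) ≠ 0 := pow_ne_zero _ hr0
      rw [hpow]
      field_simp
    have hmain : Tendsto
        (fun n : ℕ => (c (n - m) / D (n - m)) / (c n / D n) * (D (n - m) / D n)) l
        (𝓝 (r ^ m)) := by
      have := (hρm.div hρ one_ne_zero).mul (hden.mono_left inf_le_left)
      simpa using this
    refine Tendsto.congr' ?_ hmain
    filter_upwards [hevge (N₁ + m), hevQ] with n hn hQn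
    have hmn : m ≤ n := le_trans (Nat.le_add_left m N₁) hn
    have h1n : 1 ≤ n := le_trans (le_trans hN₁1 (Nat.le_add_right N₁ m)) hn
    have hN₁nm : N₁ ≤ n - m := by omega
    have h1nm : 1 ≤ n - m := le_trans hN₁1 hN₁nm
    have hD1 : 0 < D (n - m) := hDpos _ h1nm
    have hD2 : 0 < D n := hDpos n h1n
    have hcpos : 0 < c n := by
      have := (hcb n (le_trans (Nat.le_add_right N₁ m) hn) hQn).1
      have h0 : (0:ℝ) < D n / 2 := by positivity
      linarith
    field_simp
  -- pointwise limits for the (truncated) head terms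
  have hpt : ∀ m : ℕ,
      Tendsto (fun n : ℕ => if m ≤ n / 2 then b m * c (n - m) / c n else 0) l
        (𝓝 (b m * r ^ m)) := by
    intro m
    by_cases hQm : Q ∣ m
    · have hbase := (hratio m hQm).const_mul (b m)
      refine Tendsto.congr' ?_ hbase
      filter_upwards [hevge (2 * m)] with n hn
      have hm2 : m ≤ n / 2 := by omega
      rw [if_pos hm2, mul_div_assoc]
    · have h0 : b m = 0 := hbsupp m hQm
      simp only [h0, zero_mul, zero_div, ite_self]
      exact tendsto_const_nhds
  -- dominated convergence for the head
  have hbound : ∀ᶠ n in l, ∀ m : ℕ,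
      ‖if m ≤ n / 2 then b m * c (n - m) / c n else 0‖ ≤ (4 * 2 ^ α) * (b m * r ^ m) := by
    filter_upwards [hevge (2 * N₁), hevQ] with n hn hQn
    intro m
    have hbnd0 : (0:ℝ) ≤ (4 * 2 ^ α) * (b m * r ^ m) := by
      have := hbnn m
      positivity
    by_cases hm : m ≤ n / 2
    swap
    · rw [if_neg hm]; simpa using hbnd0
    rw [if_pos hm]
    have hterm_nn : 0 ≤ b m * c (n - m) / c n :=
      div_nonneg (mul_nonneg (hbnn m) (hcnn _)) (hcnn n)
    rw [Real.norm_eq_abs, abs_of_nonneg hterm_nn]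
    by_cases hQm : Q ∣ m
    swap
    · simp [hbsupp m hQm]
    have hmn : m ≤ n := le_trans hm (Nat.div_le_self n 2)
    have hN₁n : N₁ ≤ n := by omega
    have hN₁nm : N₁ ≤ n - m := by omega
    have hQnm : Q ∣ (n - m) := Nat.dvd_sub hQn hQm
    have hub := (hcb _ hN₁nm hQnm).2
    have hlb := (hcb n hN₁n hQn).1
    have h1n : 1 ≤ n := le_trans hN₁1 hN₁n
    have hn0 : (0:ℝ) < (n:ℝ) := by exact_mod_cast h1n
    have hDn : 0 < D n := hDpos n h1n
    have h1nm : 1 ≤ n - m := le_trans hN₁1 hN₁nm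
    have hcast : ((n - m : ℕ) : ℝ) = (n:ℝ) - m := by push_cast [hmn]; ring
    have hhalf : (n:ℝ)/2 ≤ ((n - m : ℕ) : ℝ) := by
      have hm' : (m:ℝ) ≤ ((n / 2 : ℕ) : ℝ) := by exact_mod_cast hm
      have hdiv : ((n / 2 : ℕ) : ℝ) ≤ (n:ℝ) / 2 := by
        have := Nat.cast_div_le (α := ℝ) (m := n) (n := 2)
        simpa using this
      rw [hcast]
      linarith
    have hDD : D (n - m) ≤ 2 ^ α * r ^ m * D n := by
      have hrw : (((n - m : ℕ)):ℝ) ^ (-α) ≤ 2 ^ α * (n:ℝ) ^ (-α) := by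
        have h1 : (((n - m : ℕ)):ℝ) ^ (-α) ≤ ((n:ℝ)/2) ^ (-α) :=
          rpow_le_rpow_of_nonpos (by positivity) hhalf (neg_nonpos.mpr hα.le)
        have h2 : ((n:ℝ)/2) ^ (-α) = (n:ℝ) ^ (-α) / 2 ^ (-α) :=
          Real.div_rpow hn0.le (by norm_num) _
        have h3 : ((2:ℝ)) ^ (-α) = ((2:ℝ) ^ α)⁻¹ := Real.rpow_neg (by norm_num) α
        rw [h2, h3, div_eq_mul_inv, inv_inv, mul_comm] at h1
        exact h1
      have hpow : r ^ n = r ^ (n - m) * r ^ m := by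
        rw [← pow_add, Nat.sub_add_cancel hmn]
      rw [hDdef]
      simp only
      calc C₀ * (((n - m : ℕ)):ℝ) ^ (-α) / r ^ (n - m)
          ≤ C₀ * (2 ^ α * (n:ℝ) ^ (-α)) / r ^ (n - m) := by gcongr
        _ = 2 ^ α * r ^ m * (C₀ * (n:ℝ) ^ (-α) / (r ^ (n - m) * r ^ m)) := by
            have : r ^ (n - m) ≠ 0 := pow_ne_zero _ hr0
            field_simp
        _ = 2 ^ α * r ^ m * (C₀ * (n:ℝ) ^ (-α) / r ^ n) := by rw [← hpow]
    have hfinal : c (n - m) / c n ≤ (4 * 2 ^ α) * r ^ m := by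
      have h0 : (0:ℝ) < D n / 2 := by positivity
      have hac : c (n - m) ≤ 2 * (2 ^ α * r ^ m * D n) := by
        refine le_trans hub ?_
        have := hDD
        linarith
      calc c (n - m) / c n ≤ (2 * (2 ^ α * r ^ m * D n)) / (D n / 2) := by
            apply div_le_div₀ ?_ hac h0 hlb
            have h2a : (0:ℝ) ≤ (2:ℝ) ^ α := (Real.rpow_pos_of_pos two_pos α).le
            have hrm : (0:ℝ) ≤ r ^ m := pow_nonneg hr.le m
            positivity
        _ = (4 * 2 ^ α) * r ^ m := by
            field_simp
            ring
    calc b m * c (n - m) / c n = b m * (c (n - m) / c n) := mul_div_assoc _ _ _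
      _ ≤ b m * ((4 * 2 ^ α) * r ^ m) := mul_le_mul_of_nonneg_left hfinal (hbnn m)
      _ = (4 * 2 ^ α) * (b m * r ^ m) := by ring
  have hS1 : Tendsto
      (fun n : ℕ => ∑' m, (if m ≤ n / 2 then b m * c (n - m) / c n else 0)) l (𝓝 B) := by
    have hsum : Summable (fun m => (4 * 2 ^ α) * (b m * r ^ m)) := hBsum.mul_left _
    have := tendsto_tsum_of_dominated_convergence hsum hpt hbound
    rw [hB]
    exact this
  -- tail estimate
  have hS2 : Tendsto
      (fun n : ℕ => ∑ m ∈ Finset.Ico (n / 2 + 1) (n + 1), b m * c (n - m) / c n) l (𝓝 0) := by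
    set C₄ : ℝ := 2 * K' * M₁ * 2 ^ β * 2 ^ (1 - α) / ((1 - α) * C₀) with hC₄def
    have hlb2 : ∀ᶠ n in l, 0 ≤ ∑ m ∈ Finset.Ico (n / 2 + 1) (n + 1), b m * c (n - m) / c n :=
      Eventually.of_forall fun n =>
        Finset.sum_nonneg fun m _ => div_nonneg (mul_nonneg (hbnn m) (hcnn _)) (hcnn n)
    have hub2 : ∀ᶠ n in l,
        ∑ m ∈ Finset.Ico (n / 2 + 1) (n + 1), b m * c (n - m) / c n
          ≤ C₄ * (n:ℝ) ^ (1 - β) := by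
      filter_upwards [hevge (2 * (Nb + N₁ + 1)), hevQ] with n hn hQn
      have h1n : 1 ≤ n := by omega
      have hn0 : (0:ℝ) < (n:ℝ) := by exact_mod_cast h1n
      have hDn : 0 < D n := hDpos n h1n
      have hlb := (hcb n (by omega) hQn).1
      have hcpos : 0 < c n := by
        have h0 : (0:ℝ) < D n / 2 := by positivity
        linarith
      have h2a : (0:ℝ) < (2:ℝ) ^ β := Real.rpow_pos_of_pos two_pos β
      have h2b : (0:ℝ) < (2:ℝ) ^ (1 - α) := Real.rpow_pos_of_pos two_pos (1 - α)
      have hrn : (0:ℝ) < r ^ n := pow_pos hr n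
      have hnhalf : (0:ℝ) < (n:ℝ) / 2 := by positivity
      -- termwise bound on the tail
      have hterm : ∀ m ∈ Finset.Ico (n / 2 + 1) (n + 1),
          b m * c (n - m)
            ≤ (K' * ((n:ℝ)/2) ^ (-β) * M₁ / r ^ n) * (((n - m : ℕ):ℝ) + 1) ^ (-α) := by
        intro m hm
        rw [Finset.mem_Ico] at hm
        have hmn : m ≤ n := by omega
        have hNbm : Nb ≤ m := by omega
        have hb2 : b m ≤ K' * ((n:ℝ)/2) ^ (-β) / r ^ m := by
          refine le_trans (hNb m hNbm) ?_
          have hmhalf : (n:ℝ)/2 ≤ (m:ℝ) := by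
            have h2m : n + 1 ≤ 2 * m := by omega
            have : (n:ℝ) + 1 ≤ 2 * (m:ℝ) := by exact_mod_cast h2m
            linarith
          have hmβ : (m:ℝ) ^ (-β) ≤ ((n:ℝ)/2) ^ (-β) :=
            rpow_le_rpow_of_nonpos hnhalf hmhalf (by linarith)
          rw [mul_div_assoc, mul_div_assoc]
          refine mul_le_mul_of_nonneg_left ?_ hK'0
          have hrm : (0:ℝ) < r ^ m := pow_pos hr m
          exact div_le_div₀ (Real.rpow_nonneg hnhalf.le _) hmβ hrm le_rfl
        have hc2 : c (n - m) ≤ M₁ * (((n - m : ℕ):ℝ) + 1) ^ (-α) / r ^ (n - m) := by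
          rw [le_div_iff₀ (pow_pos hr _)]
          exact hM₁ (n - m)
        have hpow : r ^ m * r ^ (n - m) = r ^ n := by
          rw [← pow_add, Nat.add_sub_cancel' hmn]
        have hb2nn : (0:ℝ) ≤ K' * ((n:ℝ)/2) ^ (-β) / r ^ m :=
          div_nonneg (mul_nonneg hK'0 (Real.rpow_nonneg hnhalf.le _)) (pow_pos hr m).le
        calc b m * c (n - m)
            ≤ (K' * ((n:ℝ)/2) ^ (-β) / r ^ m)
              * (M₁ * (((n - m : ℕ):ℝ) + 1) ^ (-α) / r ^ (n - m)) :=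
              mul_le_mul hb2 hc2 (hcnn _) hb2nn
          _ = (K' * ((n:ℝ)/2) ^ (-β) * M₁ / r ^ n) * (((n - m : ℕ):ℝ) + 1) ^ (-α) := by
              rw [← hpow]
              have h1 : r ^ m ≠ 0 := (pow_pos hr m).ne'
              have h2 : r ^ (n - m) ≠ 0 := (pow_pos hr _).ne'
              field_simp
      have hcst : (0:ℝ) ≤ K' * ((n:ℝ)/2) ^ (-β) * M₁ / r ^ n :=
        div_nonneg (mul_nonneg (mul_nonneg hK'0 (Real.rpow_nonneg hnhalf.le _)) hM₁pos.le)
          hrn.le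
      have hsum_le : ∑ m ∈ Finset.Ico (n / 2 + 1) (n + 1), (((n - m : ℕ):ℝ) + 1) ^ (-α)
          ≤ ((n:ℝ) + 1) ^ (1 - α) / (1 - α) := by
        calc ∑ m ∈ Finset.Ico (n / 2 + 1) (n + 1), (((n - m : ℕ):ℝ) + 1) ^ (-α)
            ≤ ∑ m ∈ Finset.range (n + 1), (((n - m : ℕ):ℝ) + 1) ^ (-α) := by
              refine Finset.sum_le_sum_of_subset_of_nonneg ?_ fun i _ _ => by positivity
              intro x hx
              simp only [Finset.mem_Ico, Finset.mem_range] at hx ⊢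
              omega
          _ = ∑ j ∈ Finset.range (n + 1), ((j:ℝ) + 1) ^ (-α) := by
              have := Finset.sum_range_reflect (fun j => ((j:ℝ) + 1) ^ (-α)) (n + 1)
              simpa using this
          _ ≤ ((↑(n + 1):ℝ)) ^ (1 - α) / (1 - α) := psum_aux hα hα1 (n + 1)
          _ = ((n:ℝ) + 1) ^ (1 - α) / (1 - α) := by norm_cast
      have hnum : ∑ m ∈ Finset.Ico (n / 2 + 1) (n + 1), b m * c (n - m)
          ≤ (K' * ((n:ℝ)/2) ^ (-β) * M₁ / r ^ n) * (((n:ℝ) + 1) ^ (1 - α) / (1 - α)) := by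
        calc ∑ m ∈ Finset.Ico (n / 2 + 1) (n + 1), b m * c (n - m)
            ≤ ∑ m ∈ Finset.Ico (n / 2 + 1) (n + 1),
                (K' * ((n:ℝ)/2) ^ (-β) * M₁ / r ^ n) * (((n - m : ℕ):ℝ) + 1) ^ (-α) :=
              Finset.sum_le_sum hterm
          _ = (K' * ((n:ℝ)/2) ^ (-β) * M₁ / r ^ n)
              * ∑ m ∈ Finset.Ico (n / 2 + 1) (n + 1), (((n - m : ℕ):ℝ) + 1) ^ (-α) :=
              (Finset.mul_sum _ _ _).symm
          _ ≤ _ := mul_le_mul_of_nonneg_left hsum_le hcst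
      have e1 : ((n:ℝ)/2) ^ (-β) = 2 ^ β * (n:ℝ) ^ (-β) := by
        rw [Real.div_rpow hn0.le (by norm_num : (0:ℝ) ≤ 2),
          Real.rpow_neg (by norm_num : (0:ℝ) ≤ 2), div_eq_mul_inv, inv_inv, mul_comm]
      have e2 : ((n:ℝ) + 1) ^ (1 - α) ≤ 2 ^ (1 - α) * (n:ℝ) ^ (1 - α) := by
        have hn1 : ((n:ℝ) + 1) ≤ 2 * n := by
          have : (1:ℝ) ≤ (n:ℝ) := by exact_mod_cast h1n
          linarith
        calc ((n:ℝ) + 1) ^ (1 - α) ≤ ((2:ℝ) * n) ^ (1 - α) :=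
              Real.rpow_le_rpow (by positivity) hn1 (by linarith)
          _ = 2 ^ (1 - α) * (n:ℝ) ^ (1 - α) := Real.mul_rpow (by norm_num) hn0.le
      have e3 : (n:ℝ) ^ (-β) * (n:ℝ) ^ (1 - α) / (n:ℝ) ^ (-α) = (n:ℝ) ^ (1 - β) := by
        rw [Real.rpow_neg hn0.le α, div_eq_mul_inv, inv_inv, ← Real.rpow_add hn0,
          ← Real.rpow_add hn0]
        congr 1
        ring
      have hnumnn : (0:ℝ) ≤
          (K' * ((n:ℝ)/2) ^ (-β) * M₁ / r ^ n) * (((n:ℝ) + 1) ^ (1 - α) / (1 - α)) := by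
        refine mul_nonneg hcst (div_nonneg (Real.rpow_nonneg (by positivity) _) (by linarith))
      calc ∑ m ∈ Finset.Ico (n / 2 + 1) (n + 1), b m * c (n - m) / c n
          = (∑ m ∈ Finset.Ico (n / 2 + 1) (n + 1), b m * c (n - m)) / c n :=
            (Finset.sum_div _ _ _).symm
        _ ≤ ((K' * ((n:ℝ)/2) ^ (-β) * M₁ / r ^ n) * (((n:ℝ) + 1) ^ (1 - α) / (1 - α)))
              / (D n / 2) := by
            refine div_le_div₀ hnumnn hnum (by positivity) hlb
        _ ≤ ((K' * (2 ^ β * (n:ℝ) ^ (-β)) * M₁ / r ^ n)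
              * ((2 ^ (1 - α) * (n:ℝ) ^ (1 - α)) / (1 - α))) / (D n / 2) := by
            rw [e1]
            have hq : (0:ℝ) < D n / 2 := by positivity
            rw [div_le_div_iff_of_pos_right hq]
            refine mul_le_mul_of_nonneg_left ?_ ?_
            · have h1a : (0:ℝ) < 1 - α := by linarith
              rw [div_le_div_iff_of_pos_right h1a]
              exact e2
            · rw [← e1]; exact hcst
        _ = C₄ * (n:ℝ) ^ (1 - β) := by
            rw [hC₄def, hDdef]
            simp only
            rw [← e3]
            have hZ : ((n:ℝ)) ^ (-α) ≠ 0 := (Real.rpow_pos_of_pos hn0 _).ne'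
            have hrn' : r ^ n ≠ 0 := hrn.ne'
            have h1α : (1:ℝ) - α ≠ 0 := by linarith
            field_simp
    have hzero : Tendsto (fun n : ℕ => C₄ * (n:ℝ) ^ (1 - β)) atTop (𝓝 0) := by
      have h := tendsto_rpow_neg_atTop (by linarith : (0:ℝ) < β - 1)
      have h2 : Tendsto (fun n : ℕ => ((n:ℝ)) ^ (-(β - 1))) atTop (𝓝 0) :=
        h.comp tendsto_natCast_atTop_atTop
      have he : (1 - β) = -(β - 1) := by ring
      rw [he]
      simpa using h2.const_mul C₄
    exact tendsto_of_tendsto_of_tendsto_of_le_of_le' tendsto_const_nhds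
      (hzero.mono_left inf_le_left) hlb2 hub2
  -- assemble
  have hsplit : ∀ n : ℕ, d n / c n
      = (∑' m, (if m ≤ n / 2 then b m * c (n - m) / c n else 0))
        + ∑ m ∈ Finset.Ico (n / 2 + 1) (n + 1), b m * c (n - m) / c n := by
    intro n
    have htsum : (∑' m, (if m ≤ n / 2 then b m * c (n - m) / c n else 0))
        = ∑ m ∈ Finset.range (n / 2 + 1), b m * c (n - m) / c n := by
      rw [tsum_eq_sum (s := Finset.range (n / 2 + 1))
        (fun m hm => if_neg (by simp [Nat.lt_succ_iff] at hm; omega))]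
      exact Finset.sum_congr rfl fun m hm =>
        if_pos (by simp [Nat.lt_succ_iff] at hm; omega)
    rw [htsum, hd n, Finset.sum_div, Finset.range_eq_Ico,
      ← Finset.sum_Ico_consecutive (fun m => b m * c (n - m) / c n)
        (Nat.zero_le (n / 2 + 1)) (by omega : n / 2 + 1 ≤ n + 1),
      ← Finset.range_eq_Ico]
  have hDiv : Tendsto (fun n : ℕ => d n / c n) l (𝓝 B) := by
    have h := hS1.add hS2
    rw [add_zero] at h
    exact h.congr fun n => (hsplit n).symm
  have h2 : Tendsto (fun n : ℕ => d n / c n / B) l (𝓝 (B / B)) := hDiv.div_const B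
  rw [div_self hBr] at h2
  refine h2.congr fun n => ?_
  rw [div_div, mul_comm]
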